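/- arXiv:1409.4321 — 2 statements merged into one kernel-verified Lean document; each statement's English description precedes it below -/
import Mathlib

section
/- Let K ⊆ ℝ^m be a compact set and let G_0, G_1, …, G_p : K → ℝ^{n×n} be continuous maps taking values in the symmetric matrices, with G(x, δ) = G_0(δ) + Σ_{i=1}^p x_i G_i(δ). Let α > 0 be such that for every δ ∈ K there exists x ∈ ℝ^p with G(x, δ) − 2α·I positive semidefinite. Define the set-valued map F on K by F(δ) = { x ∈ ℝ^p : G(x, δ) − α·I is positive semidefinite }. Then for every δ ∈ K the set F(δ) is nonempty, closed and convex, and F is lower semicontinuous: for every δ_0 ∈ K and every open set U ⊆ ℝ^p with F(δ_0) ∩ U ≠ ∅, there exists a neighborhood V of δ_0 in K such that F(δ) ∩ U ≠ ∅ for every δ ∈ V. -/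
open Matrix Finset

section auxlemmas

variable {n p : ℕ}

private lemma quad_expand (M : Matrix (Fin n) (Fin n) ℝ) (v : Fin n → ℝ) :
    v ⬝ᵥ M *ᵥ v = ∑ i, ∑ j, v i * (M i j * v j) := by
  simp [dotProduct, mulVec, Finset.mul_sum]

private lemma quad_add (A B : Matrix (Fin n) (Fin n) ℝ) (v : Fin n → ℝ) :
    v ⬝ᵥ (A + B) *ᵥ v = v ⬝ᵥ A *ᵥ v + v ⬝ᵥ B *ᵥ v := by
  simp [add_mulVec, dotProduct_add]

private lemma quad_sub (A B : Matrix (Fin n) (Fin n) ℝ) (v : Fin n → ℝ) :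
    v ⬝ᵥ (A - B) *ᵥ v = v ⬝ᵥ A *ᵥ v - v ⬝ᵥ B *ᵥ v := by
  simp [sub_mulVec, dotProduct_sub]

private lemma quad_one (a : ℝ) (v : Fin n → ℝ) :
    v ⬝ᵥ (a • (1 : Matrix (Fin n) (Fin n) ℝ)) *ᵥ v = a * ∑ i, v i ^ 2 := by
  simp only [smul_mulVec, one_mulVec, dotProduct_smul, Pi.smul_apply, smul_eq_mul,
    dotProduct, sq, Finset.mul_sum]
  exact Finset.sum_congr rfl fun i _ => by ring

private lemma psd_of_quad (M : Matrix (Fin n) (Fin n) ℝ) (hH : M.IsHermitian)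
    (h : ∀ v, 0 ≤ v ⬝ᵥ M *ᵥ v) : M.PosSemidef :=
  PosSemidef.of_dotProduct_mulVec_nonneg hH fun v => by simpa using h v

private lemma quad_of_psd {M : Matrix (Fin n) (Fin n) ℝ} (h : M.PosSemidef) (v : Fin n → ℝ) :
    0 ≤ v ⬝ᵥ M *ᵥ v := by simpa using h.dotProduct_mulVec_nonneg v

private lemma psd_smul {A : Matrix (Fin n) (Fin n) ℝ} (h : A.PosSemidef) {a : ℝ} (ha : 0 ≤ a) :
    (a • A).PosSemidef := by
  refine psd_of_quad _ ?_ fun v => ?_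
  · have hT : Aᵀ = A := by rw [← conjTranspose_eq_transpose_of_trivial, h.1]
    rw [IsHermitian, conjTranspose_eq_transpose_of_trivial, transpose_smul, hT]
  · rw [smul_mulVec, dotProduct_smul, smul_eq_mul]
    exact mul_nonneg ha (quad_of_psd h v)

private lemma herm_comb (G0m : Matrix (Fin n) (Fin n) ℝ) (Gm : Fin p → Matrix (Fin n) (Fin n) ℝ)
    (h0 : G0m.IsSymm) (hs : ∀ i, (Gm i).IsSymm) (x : Fin p → ℝ) (c : ℝ) :
    (G0m + ∑ i, x i • Gm i - c • (1 : Matrix (Fin n) (Fin n) ℝ)).IsHermitian := by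
  rw [IsHermitian, conjTranspose_eq_transpose_of_trivial, transpose_sub, transpose_add,
    transpose_sum, transpose_smul, transpose_one]
  have h0' : G0mᵀ = G0m := h0
  rw [h0']
  congr 1
  congr 1
  refine Finset.sum_congr rfl fun i _ => ?_
  rw [transpose_smul, hs i]

private lemma sum_comb (Gm : Fin p → Matrix (Fin n) (Fin n) ℝ) (x y : Fin p → ℝ) (a b : ℝ) :
    ∑ i, (a * x i + b * y i) • Gm i = a • ∑ i, x i • Gm i + b • ∑ i, y i • Gm i := by
  rw [Finset.smul_sum, Finset.smul_sum, ← Finset.sum_add_distrib]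
  refine Finset.sum_congr rfl fun i _ => ?_
  rw [add_smul, smul_smul, smul_smul]

private lemma quad_bound (D : Matrix (Fin n) (Fin n) ℝ) (v : Fin n → ℝ) (ε : ℝ) (hε : 0 ≤ ε)
    (hD : ∀ i j, |D i j| ≤ ε) : |v ⬝ᵥ D *ᵥ v| ≤ ε * (n * ∑ i, v i ^ 2) := by
  calc |v ⬝ᵥ D *ᵥ v| = |∑ i, ∑ j, v i * (D i j * v j)| := by rw [quad_expand]
    _ ≤ ∑ i, |∑ j, v i * (D i j * v j)| := Finset.abs_sum_le_sum_abs _ _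
    _ ≤ ∑ i, ∑ j, |v i * (D i j * v j)| :=
        Finset.sum_le_sum fun i _ => Finset.abs_sum_le_sum_abs _ _
    _ ≤ ∑ i, ∑ j, |v i| * (ε * |v j|) := by
        refine Finset.sum_le_sum fun i _ => Finset.sum_le_sum fun j _ => ?_
        rw [abs_mul, abs_mul]
        exact mul_le_mul_of_nonneg_left
          (mul_le_mul_of_nonneg_right (hD i j) (abs_nonneg _)) (abs_nonneg _)
    _ = ε * ((∑ i, |v i|) ^ 2) := by
        rw [sq, Finset.sum_mul_sum, Finset.mul_sum]
        refine Finset.sum_congr rfl fun i _ => ?_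
        rw [Finset.mul_sum]
        exact Finset.sum_congr rfl fun j _ => by ring
    _ ≤ ε * (n * ∑ i, v i ^ 2) := by
        refine mul_le_mul_of_nonneg_left ?_ hε
        have h := sq_sum_le_card_mul_sum_sq (s := (univ : Finset (Fin n))) (f := fun i => |v i|)
        simpa [sq_abs] using h

end auxlemmas

/-- step ii of Bliman's proof: the set-valued map
`F(δ) = {x : G(x, δ) − α·I ⪰ 0}` has nonempty closed convex values and is
lower semicontinuous on `K`. -/
theorem stmt2 (m n p : ℕ) (hm : 0 < m) (hn : 0 < n) (hp : 0 < p)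
    (K : Set (Fin m → ℝ)) (hK : IsCompact K)
    (G0 : (Fin m → ℝ) → Matrix (Fin n) (Fin n) ℝ)
    (G : Fin p → (Fin m → ℝ) → Matrix (Fin n) (Fin n) ℝ)
    (hG0c : ContinuousOn G0 K) (hGc : ∀ i, ContinuousOn (G i) K)
    (hG0s : ∀ δ ∈ K, (G0 δ).IsSymm) (hGs : ∀ i, ∀ δ ∈ K, (G i δ).IsSymm)
    (α : ℝ) (hα : 0 < α)
    (hfeas : ∀ δ ∈ K, ∃ x : Fin p → ℝ,
      (G0 δ + ∑ i, x i • G i δ - (2 * α) • (1 : Matrix (Fin n) (Fin n) ℝ)).PosSemidef)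
    (F : (Fin m → ℝ) → Set (Fin p → ℝ))
    (hF : ∀ δ, F δ = {x : Fin p → ℝ |
      (G0 δ + ∑ i, x i • G i δ - α • (1 : Matrix (Fin n) (Fin n) ℝ)).PosSemidef}) :
    (∀ δ ∈ K, (F δ).Nonempty ∧ IsClosed (F δ) ∧ Convex ℝ (F δ)) ∧
    (∀ δ0 ∈ K, ∀ U : Set (Fin p → ℝ), IsOpen U → (F δ0 ∩ U).Nonempty →
      ∃ V ∈ nhdsWithin δ0 K, ∀ δ ∈ V ∩ K, (F δ ∩ U).Nonempty) := by
  -- notation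
  set I : Matrix (Fin n) (Fin n) ℝ := 1 with hI
  have hmem : ∀ δ (x : Fin p → ℝ),
      x ∈ F δ ↔ (G0 δ + ∑ i, x i • G i δ - α • I).PosSemidef := by
    intro δ x; rw [hF δ]; rfl
  constructor
  · intro δ hδ
    refine ⟨?_, ?_, ?_⟩
    · -- nonempty
      obtain ⟨x, hx⟩ := hfeas δ hδ
      refine ⟨x, (hmem δ x).2 ?_⟩
      have hid : G0 δ + ∑ i, x i • G i δ - α • I
          = (G0 δ + ∑ i, x i • G i δ - (2 * α) • I) + α • I := by
        module
      rw [hid]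
      exact hx.add (psd_smul Matrix.PosSemidef.one hα.le)
    · -- closed
      have hset : F δ = ⋂ v : Fin n → ℝ,
          {x : Fin p → ℝ | 0 ≤ v ⬝ᵥ (G0 δ + ∑ i, x i • G i δ - α • I) *ᵥ v} := by
        ext x
        simp only [Set.mem_iInter, Set.mem_setOf_eq, hmem δ x]
        constructor
        · intro h v; exact quad_of_psd h v
        · intro h
          exact psd_of_quad _ (herm_comb _ _ (hG0s δ hδ) (fun i => hGs i δ hδ) x α) h
      rw [hset]
      refine isClosed_iInter fun v => isClosed_le continuous_const ?_
      have : Continuous fun x : Fin p → ℝ =>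
          ∑ i, ∑ j, v i * ((G0 δ i j + (∑ k, x k * G k δ i j) - α * I i j) * v j) := by
        fun_prop
      convert this using 2 with x
      rw [quad_expand]
      refine Finset.sum_congr rfl fun i _ => Finset.sum_congr rfl fun j _ => ?_
      simp [Matrix.sub_apply, Matrix.add_apply, Matrix.sum_apply, Matrix.smul_apply]
    · -- convex
      intro x hx y hy a b ha hb hab
      rw [hmem] at hx hy ⊢
      have hz : ∀ i, (a • x + b • y) i = a * x i + b * y i := fun i => rfl
      have hid : G0 δ + ∑ i, (a • x + b • y) i • G i δ - α • I
          = a • (G0 δ + ∑ i, x i • G i δ - α • I) + b • (G0 δ + ∑ i, y i • G i δ - α • I) := by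
        simp only [hz]
        rw [sum_comb]
        have hb' : b = 1 - a := by linarith
        rw [hb']
        module
      rw [hid]
      exact (psd_smul hx ha).add (psd_smul hy hb)
  · -- lower semicontinuity
    intro δ0 hδ0 U hU ⟨x0, hx0F, hx0U⟩
    obtain ⟨x1, hx1⟩ := hfeas δ0 hδ0
    obtain ⟨ε, hε, hball⟩ := Metric.isOpen_iff.1 hU x0 hx0U
    -- choose t
    set t : ℝ := min (1/2) (ε / (dist x1 x0 + 1)) with ht
    have hdistpos : (0:ℝ) < dist x1 x0 + 1 := by positivity
    have ht0 : 0 < t := lt_min (by norm_num) (div_pos hε hdistpos)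
    have ht1 : t ≤ 1 := le_trans (min_le_left _ _) (by norm_num)
    set xt : Fin p → ℝ := x0 + t • (x1 - x0) with hxt
    have hxtU : xt ∈ U := by
      apply hball
      have : dist xt x0 = t * dist x1 x0 := by
        rw [hxt, dist_eq_norm]
        simp only [add_sub_cancel_left, norm_smul, Real.norm_eq_abs, abs_of_pos ht0,
          dist_eq_norm]
      rw [Metric.mem_ball, this]
      calc t * dist x1 x0 ≤ (ε / (dist x1 x0 + 1)) * dist x1 x0 := by
            apply mul_le_mul_of_nonneg_right (min_le_right _ _) dist_nonneg
        _ < ε := by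
            rw [div_mul_eq_mul_div, div_lt_iff₀ hdistpos]
            nlinarith [dist_nonneg (x := x1) (y := x0)]
    -- f δ = G(xt, δ)
    set f : (Fin m → ℝ) → Matrix (Fin n) (Fin n) ℝ :=
      fun δ => G0 δ + ∑ i, xt i • G i δ with hf
    have hxtv : ∀ i, xt i = (1 - t) * x0 i + t * x1 i := by
      intro i; simp only [hxt, Pi.add_apply, Pi.smul_apply, Pi.sub_apply, smul_eq_mul]; ring
    -- key positivity at δ0
    have hx0psd : (G0 δ0 + ∑ i, x0 i • G i δ0 - α • I).PosSemidef := (hmem δ0 x0).1 hx0F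
    have hkey : (f δ0 - α • I - (t * α) • I).PosSemidef := by
      have hid : f δ0 - α • I - (t * α) • I
          = (1 - t) • (G0 δ0 + ∑ i, x0 i • G i δ0 - α • I)
            + t • (G0 δ0 + ∑ i, x1 i • G i δ0 - (2 * α) • I) := by
        rw [hf]
        simp only [hxtv]
        rw [sum_comb]
        module
      rw [hid]
      exact (psd_smul hx0psd (by linarith)).add (psd_smul hx1 ht0.le)
    -- continuity of f on K
    have hfc : ContinuousOn f K := by
      apply hG0c.add
      exact continuousOn_finset_sum _ fun i _ => (hGc i).const_smul (xt i)
    set ε' : ℝ := t * α / n with hε'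
    have hn' : (0:ℝ) < n := by exact_mod_cast hn
    have hε'pos : 0 < ε' := div_pos (mul_pos ht0 hα) hn'
    set S : Set (Matrix (Fin n) (Fin n) ℝ) := {A | ∀ i j, |A i j - f δ0 i j| < ε'} with hS
    have hSopen : IsOpen S := by
      have : S = ⋂ i, ⋂ j, {A : Matrix (Fin n) (Fin n) ℝ | |A i j - f δ0 i j| < ε'} := by
        ext A; simp [hS, Set.mem_iInter]
      rw [this]
      refine isOpen_iInter_of_finite fun i => isOpen_iInter_of_finite fun j => ?_
      have hc : Continuous fun A : Matrix (Fin n) (Fin n) ℝ => |A i j - f δ0 i j| :=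
        by fun_prop
      exact isOpen_lt hc continuous_const
    have hSf : f δ0 ∈ S := by
      intro i j; simpa using hε'pos
    have hV : f ⁻¹' S ∈ nhdsWithin δ0 K := (hfc δ0 hδ0) (hSopen.mem_nhds hSf)
    refine ⟨f ⁻¹' S, hV, fun δ ⟨hδS, hδK⟩ => ⟨xt, ?_, hxtU⟩⟩
    rw [hmem]
    refine psd_of_quad _ (herm_comb _ _ (hG0s δ hδK) (fun i => hGs i δ hδK) xt α) fun v => ?_
    have e0 : v ⬝ᵥ (f δ - α • I) *ᵥ v
        = v ⬝ᵥ (f δ0 - α • I) *ᵥ v + v ⬝ᵥ (f δ - f δ0) *ᵥ v := by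
      rw [quad_sub, quad_sub, quad_sub]; ring
    have e1 : t * α * ∑ i, v i ^ 2 ≤ v ⬝ᵥ (f δ0 - α • I) *ᵥ v := by
      have := quad_of_psd hkey v
      rw [quad_sub, quad_one] at this
      linarith
    have e2 : |v ⬝ᵥ (f δ - f δ0) *ᵥ v| ≤ ε' * (n * ∑ i, v i ^ 2) := by
      apply quad_bound _ _ _ hε'pos.le
      intro i j
      exact (hδS i j).le
    have e3 : ε' * (n * ∑ i, v i ^ 2) = t * α * ∑ i, v i ^ 2 := by
      rw [hε']; field_simp
    have habs := abs_le.1 e2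
    show 0 ≤ v ⬝ᵥ (f δ - α • I) *ᵥ v
    rw [e0]
    linarith [e1, habs.1, e3 ▸ habs.1]
end

section
/- Let K ⊆ ℝ^m be a nonempty compact set and let G_0, G_1, …, G_p : K → ℝ^{n×n} be continuous maps taking values in the symmetric matrices, with G(x, δ) = G_0(δ) + Σ_{i=1}^p x_i G_i(δ). If for every δ ∈ K there exists x(δ) ∈ ℝ^p such that G(x(δ), δ) is positive definite, then there exists a continuous function f : K → ℝ^p such that for every δ ∈ K the matrix G(f(δ), δ) is positive definite. -/
open Matrix

attribute [local instance] Matrix.normedAddCommGroup Matrix.normedSpace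

private lemma posdef_smul' {n : ℕ} {A : Matrix (Fin n) (Fin n) ℝ}
    (hA : A.PosDef) {a : ℝ} (ha : 0 < a) : (a • A).PosDef := by
  rw [posDef_iff_dotProduct_mulVec]
  refine ⟨?_, fun v hv => ?_⟩
  · have := hA.1
    rw [Matrix.IsHermitian, conjTranspose_eq_transpose_of_trivial] at this ⊢
    rw [Matrix.transpose_smul, this]
  · rw [Matrix.smul_mulVec, dotProduct_smul, smul_eq_mul]
    exact mul_pos ha (hA.dotProduct_mulVec_pos hv)

private lemma possemidef_smul' {n : ℕ} {A : Matrix (Fin n) (Fin n) ℝ}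
    (hA : A.PosSemidef) {a : ℝ} (ha : 0 ≤ a) : (a • A).PosSemidef := by
  rw [posSemidef_iff_dotProduct_mulVec]
  refine ⟨?_, fun v => ?_⟩
  · have := hA.1
    rw [Matrix.IsHermitian, conjTranspose_eq_transpose_of_trivial] at this ⊢
    rw [Matrix.transpose_smul, this]
  · rw [Matrix.smul_mulVec, dotProduct_smul, smul_eq_mul]
    exact mul_nonneg ha (hA.dotProduct_mulVec_nonneg v)

/-- A real positive definite matrix is coercive: the quadratic form dominates `c * ‖v‖²`. -/
private lemma posdef_coercive {n : ℕ} (hn : 0 < n) {A : Matrix (Fin n) (Fin n) ℝ}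
    (hA : A.PosDef) : ∃ c > 0, ∀ v : Fin n → ℝ, c * ‖v‖ ^ 2 ≤ v ⬝ᵥ A *ᵥ v := by
  haveI : Nonempty (Fin n) := Fin.pos_iff_nonempty.mp hn
  have hquad : ∀ v : Fin n → ℝ, v ≠ 0 → 0 < v ⬝ᵥ A *ᵥ v := by
    intro v hv
    simpa using hA.dotProduct_mulVec_pos hv
  have hcont : Continuous fun v : Fin n → ℝ => v ⬝ᵥ A *ᵥ v := by
    simp only [dotProduct, Matrix.mulVec]
    exact continuous_finset_sum _ fun i _ =>
      (continuous_apply i).mul (continuous_finset_sum _ fun j _ =>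
        (continuous_const.mul (continuous_apply j)))
  have hS : IsCompact (Metric.sphere (0 : Fin n → ℝ) 1) := isCompact_sphere 0 1
  have hSne : (Metric.sphere (0 : Fin n → ℝ) 1).Nonempty :=
    NormedSpace.sphere_nonempty.mpr zero_le_one
  obtain ⟨v0, hv0S, hv0min⟩ := hS.exists_isMinOn hSne hcont.continuousOn
  have hv0ne : v0 ≠ 0 := by
    intro h
    rw [h] at hv0S
    simp at hv0S
  refine ⟨v0 ⬝ᵥ A *ᵥ v0, hquad v0 hv0ne, fun v => ?_⟩
  rcases eq_or_ne v 0 with rfl | hv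
  · simp
  · have hnv : 0 < ‖v‖ := norm_pos_iff.mpr hv
    have hu : (‖v‖⁻¹ • v) ∈ Metric.sphere (0 : Fin n → ℝ) 1 := by
      simp [norm_smul, abs_of_pos (inv_pos.mpr hnv), inv_mul_cancel₀ hnv.ne']
    have hmin : v0 ⬝ᵥ A *ᵥ v0 ≤ (‖v‖⁻¹ • v) ⬝ᵥ A *ᵥ (‖v‖⁻¹ • v) := hv0min hu
    have hscale : (‖v‖⁻¹ • v) ⬝ᵥ A *ᵥ (‖v‖⁻¹ • v) = ‖v‖⁻¹ ^ 2 * (v ⬝ᵥ A *ᵥ v) := by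
      rw [smul_dotProduct, Matrix.mulVec_smul, dotProduct_smul]
      simp [smul_eq_mul]; ring
    rw [hscale] at hmin
    have h2 : (v0 ⬝ᵥ A *ᵥ v0) * ‖v‖ ^ 2 ≤ ‖v‖⁻¹ ^ 2 * (v ⬝ᵥ A *ᵥ v) * ‖v‖ ^ 2 :=
      mul_le_mul_of_nonneg_right hmin (by positivity)
    calc (v0 ⬝ᵥ A *ᵥ v0) * ‖v‖ ^ 2 ≤ ‖v‖⁻¹ ^ 2 * (v ⬝ᵥ A *ᵥ v) * ‖v‖ ^ 2 := h2
      _ = v ⬝ᵥ A *ᵥ v := by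
          field_simp

/-- Entrywise sup-norm bound on the quadratic form. -/
private lemma quad_abs_le {n : ℕ} (A : Matrix (Fin n) (Fin n) ℝ) (v : Fin n → ℝ) :
    |v ⬝ᵥ A *ᵥ v| ≤ (n : ℝ) ^ 2 * ‖A‖ * ‖v‖ ^ 2 := by
  have hrw : v ⬝ᵥ A *ᵥ v = ∑ i, ∑ j, v i * (A i j * v j) := by
    simp [dotProduct, Matrix.mulVec, Finset.mul_sum]
  rw [hrw]
  calc |∑ i, ∑ j, v i * (A i j * v j)|
      ≤ ∑ i, |∑ j, v i * (A i j * v j)| := Finset.abs_sum_le_sum_abs _ _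
    _ ≤ ∑ i : Fin n, ∑ j : Fin n, |v i * (A i j * v j)| :=
        Finset.sum_le_sum fun i _ => Finset.abs_sum_le_sum_abs _ _
    _ ≤ ∑ _i : Fin n, ∑ _j : Fin n, ‖v‖ * (‖A‖ * ‖v‖) := by
        refine Finset.sum_le_sum fun i _ => Finset.sum_le_sum fun j _ => ?_
        rw [abs_mul, abs_mul]
        have h1 : |v i| ≤ ‖v‖ := norm_le_pi_norm v i
        have h2 : |A i j| ≤ ‖A‖ := Matrix.norm_entry_le_entrywise_sup_norm A
        have h3 : |v j| ≤ ‖v‖ := norm_le_pi_norm v j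
        exact mul_le_mul h1 (mul_le_mul h2 h3 (abs_nonneg _) (norm_nonneg _))
          (by positivity) (norm_nonneg _)
    _ = (n : ℝ) ^ 2 * ‖A‖ * ‖v‖ ^ 2 := by
        simp [Finset.sum_const]
        ring

/-- step iii of Bliman's proof, via Michael's selection theorem:
pointwise feasibility of the strict LMI on a nonempty compact set `K` yields a
continuous solution `f : K → ℝ^p`. -/
theorem stmt3 (m n p : ℕ) (hm : 0 < m) (hn : 0 < n) (hp : 0 < p)
    (K : Set (Fin m → ℝ)) (hK : IsCompact K) (hKne : K.Nonempty)
    (G0 : (Fin m → ℝ) → Matrix (Fin n) (Fin n) ℝ)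
    (G : Fin p → (Fin m → ℝ) → Matrix (Fin n) (Fin n) ℝ)
    (hG0c : ContinuousOn G0 K) (hGc : ∀ i, ContinuousOn (G i) K)
    (hG0s : ∀ δ ∈ K, (G0 δ).IsSymm) (hGs : ∀ i, ∀ δ ∈ K, (G i δ).IsSymm)
    (hfeas : ∀ δ ∈ K, ∃ x : Fin p → ℝ, (G0 δ + ∑ i, x i • G i δ).PosDef) :
    ∃ f : (Fin m → ℝ) → (Fin p → ℝ), ContinuousOn f K ∧
      ∀ δ ∈ K, (G0 δ + ∑ i, f δ i • G i δ).PosDef := by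
  classical
  haveI : CompactSpace K := isCompact_iff_compactSpace.mp hK
  -- the family of feasible sets over the subtype K
  set M : (Fin p → ℝ) → K → Matrix (Fin n) (Fin n) ℝ :=
    fun x δ => G0 δ.1 + ∑ i, x i • G i δ.1 with hM
  set t : K → Set (Fin p → ℝ) := fun δ => {x | (M x δ).PosDef} with htdef
  -- convexity of each feasible set
  have ht : ∀ δ : K, Convex ℝ (t δ) := by
    intro δ x hx y hy a b ha hb hab
    have key : M (a • x + b • y) δ = a • M x δ + b • M y δ := by
      have h1 : G0 δ.1 = a • G0 δ.1 + b • G0 δ.1 := by rw [← add_smul, hab, one_smul]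
      calc M (a • x + b • y) δ
          = G0 δ.1 + (∑ i, (a * x i) • G i δ.1 + ∑ i, (b * y i) • G i δ.1) := by
            simp only [hM, Pi.add_apply, Pi.smul_apply, smul_eq_mul, add_smul,
              Finset.sum_add_distrib]
        _ = a • M x δ + b • M y δ := by
            simp only [hM, smul_add, Finset.smul_sum, smul_smul]
            conv_lhs => rw [h1]
            abel
    show (M (a • x + b • y) δ).PosDef
    rw [key]
    rcases eq_or_lt_of_le ha with ha0 | hapos
    · have hb1 : b = 1 := by linarith
      simpa [← ha0, hb1, htdef] using hy
    · exact (posdef_smul' hx hapos).add_posSemidef (possemidef_smul' hy.posSemidef hb)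
  -- continuity of δ ↦ M x δ for fixed x
  have hMc : ∀ x : Fin p → ℝ, Continuous fun δ : K => M x δ := by
    intro x
    have h0 : Continuous fun δ : K => G0 δ.1 := hG0c.restrict
    have hi : ∀ i, Continuous fun δ : K => G i δ.1 := fun i => (hGc i).restrict
    exact h0.add (continuous_finset_sum _ fun i _ => (hi i).const_smul (x i))
  -- symmetry of M x δ
  have hMs : ∀ (x : Fin p → ℝ) (δ : K), (M x δ).IsSymm := by
    intro x δ
    refine (hG0s δ.1 δ.2).add ?_
    rw [Matrix.IsSymm, Matrix.transpose_sum]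
    exact Finset.sum_congr rfl fun i _ => (hGs i δ.1 δ.2).smul (x i)
  -- local sections
  have hloc : ∀ δ : K, ∃ U ∈ nhds δ, ∃ g : K → (Fin p → ℝ),
      ContinuousOn g U ∧ ∀ y ∈ U, g y ∈ t y := by
    intro δ0
    obtain ⟨x0, hx0⟩ := hfeas δ0.1 δ0.2
    have hA0 : (M x0 δ0).PosDef := hx0
    obtain ⟨c, hc, hcoer⟩ := posdef_coercive hn hA0
    set ε : ℝ := c / ((n : ℝ) ^ 2 + 1) with hε
    have hεpos : 0 < ε := by positivity
    refine ⟨(fun δ : K => M x0 δ) ⁻¹' Metric.ball (M x0 δ0) ε,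
      (hMc x0).continuousAt.preimage_mem_nhds (Metric.ball_mem_nhds _ hεpos),
      fun _ => x0, continuousOn_const, fun y hy => ?_⟩
    have hdist : ‖M x0 y - M x0 δ0‖ < ε := by
      rw [← dist_eq_norm]
      exact hy
    refine Matrix.PosDef.of_dotProduct_mulVec_pos (M := M x0 y) ?_ fun v hv => ?_
    · rw [Matrix.IsHermitian, conjTranspose_eq_transpose_of_trivial]
      exact hMs x0 y
    · rw [star_trivial]
      have hdecomp : M x0 y = M x0 δ0 + (M x0 y - M x0 δ0) := by abel
      have hq : v ⬝ᵥ (M x0 y) *ᵥ v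
          = v ⬝ᵥ (M x0 δ0) *ᵥ v + v ⬝ᵥ (M x0 y - M x0 δ0) *ᵥ v := by
        rw [hdecomp]
        rw [Matrix.add_mulVec, dotProduct_add]
        abel
      have hnv : 0 < ‖v‖ := norm_pos_iff.mpr hv
      have h1 : c * ‖v‖ ^ 2 ≤ v ⬝ᵥ (M x0 δ0) *ᵥ v := hcoer v
      have h2 : |v ⬝ᵥ (M x0 y - M x0 δ0) *ᵥ v| ≤ (n : ℝ) ^ 2 * ‖M x0 y - M x0 δ0‖ * ‖v‖ ^ 2 :=
        quad_abs_le _ v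
      have h3 : (n : ℝ) ^ 2 * ‖M x0 y - M x0 δ0‖ * ‖v‖ ^ 2 < c * ‖v‖ ^ 2 := by
        have hlt : (n : ℝ) ^ 2 * ‖M x0 y - M x0 δ0‖ < c := by
          have hb : (n : ℝ) ^ 2 * ‖M x0 y - M x0 δ0‖ < (n : ℝ) ^ 2 * ε + ε := by
            nlinarith [norm_nonneg (M x0 y - M x0 δ0), sq_nonneg (n : ℝ)]
          have : (n : ℝ) ^ 2 * ε + ε = c := by
            rw [hε, ← add_one_mul ((n : ℝ) ^ 2)]
            field_simp
          linarith
        exact mul_lt_mul_of_pos_right hlt (by positivity)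
      have h4 : -((n : ℝ) ^ 2 * ‖M x0 y - M x0 δ0‖ * ‖v‖ ^ 2)
          ≤ v ⬝ᵥ (M x0 y - M x0 δ0) *ᵥ v := (abs_le.mp h2).1
      rw [hq]
      linarith
  obtain ⟨g, hg⟩ := exists_continuous_forall_mem_convex_of_local ht hloc
  refine ⟨fun δ => if h : δ ∈ K then g ⟨δ, h⟩ else 0, ?_, ?_⟩
  · rw [continuousOn_iff_continuous_restrict]
    have : K.restrict (fun δ => if h : δ ∈ K then g ⟨δ, h⟩ else 0) = fun δ : K => g δ := by
      funext δ
      simp [Set.restrict, δ.2]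
    rw [show K.domRestrict _ = _ from this]
    exact g.continuous
  · intro δ hδ
    have := hg ⟨δ, hδ⟩
    simpa [htdef, hM, hδ] using this
end
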